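/- The interpolated product ∗_r on a quasi-shuffle algebra, defined by u ∗_r v = Σ^{−r}(Σ^r u * Σ^r v), satisfies the recursion: 1 ∗_r w = w ∗_r 1 = w; a ∗_r b = ab + ba + (1−2r)(a⋄b) for letters a,b; and (av) ∗_r (bw) = a(v ∗_r bw) + b(av ∗_r w) + (1−2r)(a⋄b)(v ∗_r w) + (r²−r)(a⋄b)⋄(v ∗_r w) for letters a,b and words v,w with vw ≠ 1. -/

import Mathlib

/-!
Quasi-shuffle algebras (Hoffman–Ihara).  We model the span `kA` of the alphabet
(with its commutative associative product `⋄`, written `*` in `L`) as a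
non-unital commutative `k`-algebra `L`, and the word algebra `k⟨A⟩` as the
tensor algebra `TensorAlgebra k L`, in which a word `a₁⋯aₙ` is the product
`ι a₁ * ⋯ * ι aₙ`.
-/

open TensorAlgebra

variable (k : Type*) [Field k]
variable {L : Type*} [NonUnitalCommRing L] [Module k L]
  [SMulCommClass k L L] [IsScalarTower k L L]

/-- The word `a₁⋯aₙ` as an element of the tensor algebra. -/
def word (l : List L) : TensorAlgebra k L := (l.map fun a => TensorAlgebra.ι k a).prod

/-- The `⋄`-product of the letters of a nonempty block (junk value `0` on `[]`). -/
def blockProd : List L → L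
  | [] => 0
  | a :: t => t.foldl (· * ·) a

/-- The Hoffman–Ihara operator `Ψ_f` on words, for `f = c₁t + c₂t² + ⋯`:
`Ψ_f(w) = Σ_{(i₁,…,i_m) composition of ℓ(w)} c_{i₁}⋯c_{i_m} I[w]`,
written via the recursion on the first block. -/
def psi (c : ℕ → k) : List L → TensorAlgebra k L
  | [] => 1
  | a :: w => ∑ j ∈ Finset.range (w.length + 1),
      c (j + 1) • (TensorAlgebra.ι k (blockProd (a :: w.take j)) * psi c (w.drop j))
  termination_by l => l.length
  decreasing_by simp [List.length_drop] <;> omega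

set_option linter.unusedSectionVars false
set_option linter.unnecessarySimpa false

lemma word_nil : word k ([] : List L) = 1 := rfl

lemma word_cons (a : L) (l : List L) : word k (a :: l) = TensorAlgebra.ι k a * word k l := by
  simp [word]

lemma word_append (u v : List L) : word k (u ++ v) = word k u * word k v := by
  simp [word]

lemma word_mem_span (x : TensorAlgebra k L) :
    x ∈ Submodule.span k (Set.range (word k (L := L))) := by
  have hmul : ∀ x ∈ Submodule.span k (Set.range (word k (L := L))),
      ∀ y ∈ Submodule.span k (Set.range (word k (L := L))),
      x * y ∈ Submodule.span k (Set.range (word k (L := L))) := by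
    intro x hx
    induction hx using Submodule.span_induction with
    | mem x hx =>
      obtain ⟨u, rfl⟩ := hx
      intro y hy
      induction hy using Submodule.span_induction with
      | mem y hy =>
        obtain ⟨v, rfl⟩ := hy
        exact Submodule.subset_span ⟨u ++ v, (word_append k u v)⟩
      | zero => simpa using Submodule.zero_mem _
      | add y z _ _ hy hz => rw [mul_add]; exact Submodule.add_mem _ hy hz
      | smul c y _ hy => rw [mul_smul_comm]; exact Submodule.smul_mem _ _ hy
    | zero => intro y hy; simpa using Submodule.zero_mem _
    | add x z _ _ hx hz => intro y hy; rw [add_mul]; exact Submodule.add_mem _ (hx y hy) (hz y hy)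
    | smul c x _ hx => intro y hy; rw [smul_mul_assoc]; exact Submodule.smul_mem _ _ (hx y hy)
  induction x using TensorAlgebra.induction with
  | algebraMap r =>
    have : (algebraMap k (TensorAlgebra k L)) r = r • word k ([] : List L) := by
      simp [word_nil, Algebra.algebraMap_eq_smul_one]
    rw [this]; exact Submodule.smul_mem _ _ (Submodule.subset_span ⟨[], rfl⟩)
  | ι a => exact Submodule.subset_span ⟨[a], by simp [word]⟩
  | mul x y hx hy => exact hmul x hx y hy
  | add x y hx hy => exact Submodule.add_mem _ hx hy

lemma word_span_ind {P : TensorAlgebra k L → Prop}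
    (hw : ∀ u : List L, P (word k u))
    (hsmul : ∀ (c : k) (x), P x → P (c • x))
    (hadd : ∀ x y, P x → P y → P (x + y)) : ∀ x, P x := by
  have h0 : P 0 := by simpa using hsmul 0 (word k []) (hw [])
  intro x
  induction word_mem_span k x using Submodule.span_induction with
  | mem x hx => obtain ⟨u, rfl⟩ := hx; exact hw u
  | zero => exact h0
  | add x y _ _ hx hy => exact hadd x y hx hy
  | smul c x _ hx => exact hsmul c x hx

lemma psi_nil (c : ℕ → k) : psi k c ([] : List L) = 1 := by rw [psi]

lemma psi_cons (c : ℕ → k) (a : L) (w : List L) : psi k c (a :: w) =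
    ∑ j ∈ Finset.range (w.length + 1),
      c (j + 1) • (TensorAlgebra.ι k (blockProd (a :: w.take j)) * psi k c (w.drop j)) := by
  rw [psi]

lemma psi_single (c : ℕ → k) (hc : c 1 = 1) (a : L) : psi k c [a] = TensorAlgebra.ι k a := by
  rw [psi_cons]; simp [blockProd, psi_nil, hc]

lemma foldl_mul (a : L) (t : List L) : ∀ b : L, a * t.foldl (· * ·) b = t.foldl (· * ·) (a * b) := by
  induction t with
  | nil => intro b; rfl
  | cons x t ih => intro b; simpa [mul_assoc] using ih (b * x)

lemma blockProd_cons₂ (a b : L) (t : List L) :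
    blockProd (a :: b :: t) = blockProd ((a * b) :: t) := rfl

lemma blockProd_mul (a b : L) (t : List L) :
    blockProd ((a * b) :: t) = a * blockProd (b :: t) := (foldl_mul a t b).symm

lemma psi_geom_cons₂ (s : k) (a b : L) (w : List L) :
    psi k (fun n => s ^ (n - 1)) (a :: b :: w)
      = TensorAlgebra.ι k a * psi k (fun n => s ^ (n - 1)) (b :: w)
        + s • psi k (fun n => s ^ (n - 1)) ((a * b) :: w) := by
  rw [psi_cons, List.length_cons, Finset.sum_range_succ', add_comm]
  congr 1
  · simp [blockProd]
  · rw [psi_cons, Finset.smul_sum]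
    refine Finset.sum_congr rfl fun j hj => ?_
    rw [smul_smul]
    simp only [Nat.add_sub_cancel, List.take_succ_cons, List.drop_succ_cons, blockProd_cons₂,
      pow_succ']

section ops
variable {k}
variable (D : L → TensorAlgebra k L →ₗ[k] TensorAlgebra k L)

lemma Dgen (hDw : ∀ (a c : L) (u : List L),
      D a (TensorAlgebra.ι k c * word k u) = TensorAlgebra.ι k (a * c) * word k u) :
    ∀ (a c : L) (z : TensorAlgebra k L),
      D a (TensorAlgebra.ι k c * z) = TensorAlgebra.ι k (a * c) * z := by
  intro a c
  refine word_span_ind k (fun u => hDw a c u) ?_ ?_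
  · intro e x hx; rw [mul_smul_comm, map_smul, hx, mul_smul_comm]
  · intro x y hx hy; rw [mul_add, map_add, hx, hy, mul_add]

lemma D_word (hDw : ∀ (a c : L) (u : List L),
      D a (TensorAlgebra.ι k c * word k u) = TensorAlgebra.ι k (a * c) * word k u)
    (a c : L) (u : List L) : D a (word k (c :: u)) = word k ((a * c) :: u) := by
  rw [word_cons, hDw, ← word_cons]

lemma D_iota (hDw : ∀ (a c : L) (u : List L),
      D a (TensorAlgebra.ι k c * word k u) = TensorAlgebra.ι k (a * c) * word k u)
    (a c : L) : D a (TensorAlgebra.ι k c) = TensorAlgebra.ι k (a * c) := by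
  have := hDw a c []; rwa [word_nil, mul_one, mul_one] at this

lemma D_D (hD1 : ∀ a : L, D a 1 = 0)
    (hDw : ∀ (a c : L) (u : List L),
      D a (TensorAlgebra.ι k c * word k u) = TensorAlgebra.ι k (a * c) * word k u) :
    ∀ (a b : L) (z : TensorAlgebra k L), D a (D b z) = D (a * b) z := by
  intro a b
  refine word_span_ind k ?_ ?_ ?_
  · intro u
    cases u with
    | nil => rw [word_nil, hD1, map_zero, hD1]
    | cons c u' =>
      rw [D_word D hDw, D_word D hDw, D_word D hDw, mul_assoc]
  · intro e x hx; rw [map_smul, map_smul, hx, map_smul]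
  · intro x y hx hy; rw [map_add, map_add, hx, hy, map_add]

lemma D_psi (hD1 : ∀ a : L, D a 1 = 0)
    (hDw : ∀ (a c : L) (u : List L),
      D a (TensorAlgebra.ι k c * word k u) = TensorAlgebra.ι k (a * c) * word k u)
    (a : L) (c : ℕ → k) (e : L) (u : List L) :
    D a (psi k c (e :: u)) = psi k c ((a * e) :: u) := by
  rw [psi_cons, psi_cons, map_sum]
  refine Finset.sum_congr rfl fun j hj => ?_
  rw [map_smul, Dgen D hDw, ← blockProd_mul]

variable (S : TensorAlgebra k L →ₗ[k] TensorAlgebra k L) (s : k)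

lemma S_one (hS : ∀ u : List L, S (word k u) = psi k (fun n => s ^ (n - 1)) u) :
    S 1 = 1 := by
  have := hS []; rwa [word_nil, psi_nil] at this

lemma S_iota (hS : ∀ u : List L, S (word k u) = psi k (fun n => s ^ (n - 1)) u) (a : L) :
    S (TensorAlgebra.ι k a) = TensorAlgebra.ι k a := by
  have := hS [a]
  rw [word_cons, word_nil, mul_one] at this
  rw [this, psi_single k _ (by simp)]

lemma S_mul_iota (hD1 : ∀ a : L, D a 1 = 0)
    (hDw : ∀ (a c : L) (u : List L),
      D a (TensorAlgebra.ι k c * word k u) = TensorAlgebra.ι k (a * c) * word k u)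
    (hS : ∀ u : List L, S (word k u) = psi k (fun n => s ^ (n - 1)) u) :
    ∀ (a : L) (z : TensorAlgebra k L),
      S (TensorAlgebra.ι k a * z) = TensorAlgebra.ι k a * S z + s • S (D a z) := by
  intro a
  refine word_span_ind k ?_ ?_ ?_
  · intro u
    cases u with
    | nil =>
      rw [word_nil, mul_one, hD1, map_zero, smul_zero, add_zero, S_one S s hS, mul_one,
        S_iota S s hS]
    | cons e u' =>
      rw [← word_cons, hS, psi_geom_cons₂, D_word D hDw, hS, hS]
  · intro c x hx
    simp only [mul_smul_comm, map_smul, hx, smul_add, smul_comm s c]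
  · intro x y hx hy
    simp only [mul_add, map_add, hx, hy, smul_add]
    abel

lemma S_D_comm (hD1 : ∀ a : L, D a 1 = 0)
    (hDw : ∀ (a c : L) (u : List L),
      D a (TensorAlgebra.ι k c * word k u) = TensorAlgebra.ι k (a * c) * word k u)
    (hS : ∀ u : List L, S (word k u) = psi k (fun n => s ^ (n - 1)) u) :
    ∀ (a : L) (z : TensorAlgebra k L), D a (S z) = S (D a z) := by
  intro a
  refine word_span_ind k ?_ ?_ ?_
  · intro u
    cases u with
    | nil => rw [word_nil, S_one S s hS, hD1, map_zero]
    | cons e u' =>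
      rw [hS, D_psi D hD1 hDw, D_word D hDw, hS]
  · intro c x hx; simp [hx]
  · intro x y hx hy; simp [hx, hy]

end ops

section comp
variable {k}
variable (D : L → TensorAlgebra k L →ₗ[k] TensorAlgebra k L)
variable (S S' : TensorAlgebra k L →ₗ[k] TensorAlgebra k L) (s : k)

lemma SS'_id (hD1 : ∀ a : L, D a 1 = 0)
    (hDw : ∀ (a c : L) (u : List L),
      D a (TensorAlgebra.ι k c * word k u) = TensorAlgebra.ι k (a * c) * word k u)
    (hS : ∀ u : List L, S (word k u) = psi k (fun n => s ^ (n - 1)) u)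
    (hS' : ∀ u : List L, S' (word k u) = psi k (fun n => (-s) ^ (n - 1)) u) :
    ∀ z : TensorAlgebra k L, S' (S z) = z := by
  have key : ∀ u : List L, S' (S (word k u)) = word k u := by
    intro u
    induction u with
    | nil => rw [word_nil, S_one S s hS, S_one S' (-s) hS']
    | cons a t ih =>
      cases t with
      | nil =>
        rw [word_cons, word_nil, mul_one, S_iota S s hS, S_iota S' (-s) hS']
      | cons b w =>
        have hDword := D_word D hDw a b w
        rw [word_cons, S_mul_iota D S s hD1 hDw hS, map_add, map_smul, hDword,
          S_mul_iota D S' (-s) hD1 hDw hS', S_D_comm D S s hD1 hDw hS, hDword, ih,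
          neg_smul]
        abel
  refine word_span_ind k key ?_ ?_
  · intro c x hx; simp [hx]
  · intro x y hx hy; simp [hx, hy]

end comp

section mlem
variable {k}
variable (m : TensorAlgebra k L →ₗ[k] TensorAlgebra k L →ₗ[k] TensorAlgebra k L)

lemma hmrec_gen
    (hmrec : ∀ (a b : L) (v w : List L),
      m (TensorAlgebra.ι k a * word k v) (TensorAlgebra.ι k b * word k w)
        = TensorAlgebra.ι k a * m (word k v) (TensorAlgebra.ι k b * word k w)
          + TensorAlgebra.ι k b * m (TensorAlgebra.ι k a * word k v) (word k w)
          + TensorAlgebra.ι k (a * b) * m (word k v) (word k w)) :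
    ∀ (a b : L) (x y : TensorAlgebra k L),
      m (TensorAlgebra.ι k a * x) (TensorAlgebra.ι k b * y)
        = TensorAlgebra.ι k a * m x (TensorAlgebra.ι k b * y)
          + TensorAlgebra.ι k b * m (TensorAlgebra.ι k a * x) y
          + TensorAlgebra.ι k (a * b) * m x y := by
  intro a b
  have step1 : ∀ (v : List L) (y : TensorAlgebra k L),
      m (TensorAlgebra.ι k a * word k v) (TensorAlgebra.ι k b * y)
        = TensorAlgebra.ι k a * m (word k v) (TensorAlgebra.ι k b * y)
          + TensorAlgebra.ι k b * m (TensorAlgebra.ι k a * word k v) y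
          + TensorAlgebra.ι k (a * b) * m (word k v) y := by
    intro v
    refine word_span_ind k (fun w => hmrec a b v w) ?_ ?_
    · intro c y hy
      simp only [mul_smul_comm, map_smul, LinearMap.smul_apply, hy, smul_add]
    · intro y z hy hz
      simp only [mul_add, map_add, LinearMap.add_apply, hy, hz]
      abel
  refine word_span_ind k (P := fun x => ∀ y : TensorAlgebra k L,
      m (TensorAlgebra.ι k a * x) (TensorAlgebra.ι k b * y)
        = TensorAlgebra.ι k a * m x (TensorAlgebra.ι k b * y)
          + TensorAlgebra.ι k b * m (TensorAlgebra.ι k a * x) y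
          + TensorAlgebra.ι k (a * b) * m x y) step1 ?_ ?_
  · intro c x hx y
    simp only [mul_smul_comm, map_smul, LinearMap.smul_apply, hx y, smul_add]
  · intro x z hx hz y
    simp only [mul_add, map_add, LinearMap.add_apply, hx y, hz y]
    abel

end mlem

section dag
variable {k}
variable (m : TensorAlgebra k L →ₗ[k] TensorAlgebra k L →ₗ[k] TensorAlgebra k L)
variable (D : L → TensorAlgebra k L →ₗ[k] TensorAlgebra k L)

lemma dagger2 (hmul : ∀ x, m 1 x = x) (hmur : ∀ x, m x 1 = x)
    (hmrec : ∀ (a b : L) (v w : List L),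
      m (TensorAlgebra.ι k a * word k v) (TensorAlgebra.ι k b * word k w)
        = TensorAlgebra.ι k a * m (word k v) (TensorAlgebra.ι k b * word k w)
          + TensorAlgebra.ι k b * m (TensorAlgebra.ι k a * word k v) (word k w)
          + TensorAlgebra.ι k (a * b) * m (word k v) (word k w))
    (hD1 : ∀ a : L, D a 1 = 0)
    (hDw : ∀ (a c : L) (u : List L),
      D a (TensorAlgebra.ι k c * word k u) = TensorAlgebra.ι k (a * c) * word k u) :
    ∀ (a b : L) (x y : TensorAlgebra k L),
      m (D a x) (D b y) + D (a * b) (m x y)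
        = D a (m x (D b y)) + D b (m (D a x) y) := by
  intro a b
  have G := hmrec_gen m hmrec
  have Dg := Dgen D hDw
  have DD := D_D D hD1 hDw
  have base : ∀ v w : List L,
      m (D a (word k v)) (D b (word k w)) + D (a * b) (m (word k v) (word k w))
        = D a (m (word k v) (D b (word k w))) + D b (m (D a (word k v)) (word k w)) := by
    intro v w
    cases v with
    | nil =>
      simp only [word_nil, hD1, map_zero, LinearMap.map_zero₂, LinearMap.zero_apply, hmul,
        zero_add, add_zero, DD]
    | cons c v' =>
      cases w with
      | nil =>
        simp only [word_nil, hD1, map_zero, LinearMap.map_zero₂, LinearMap.zero_apply, hmur,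
          zero_add, add_zero, DD]
        rw [mul_comm b a]
      | cons d w' =>
        simp only [word_cons, Dg, G, map_add, Dg]
        simp only [mul_comm, mul_left_comm, mul_assoc]
        abel
  refine word_span_ind k (P := fun x => ∀ y : TensorAlgebra k L,
      m (D a x) (D b y) + D (a * b) (m x y)
        = D a (m x (D b y)) + D b (m (D a x) y)) ?_ ?_ ?_
  · intro v
    refine word_span_ind k (base v) ?_ ?_
    · intro c y hy
      simp only [map_smul, LinearMap.smul_apply]
      rw [← smul_add, ← smul_add, hy]
    · intro y z hy hz
      simp only [map_add, LinearMap.add_apply]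
      rw [add_add_add_comm, hy, hz, add_add_add_comm]
  · intro c x hx y
    simp only [map_smul, LinearMap.smul_apply]
    rw [← smul_add, ← smul_add, hx y]
  · intro x z hx hz y
    simp only [map_add, LinearMap.add_apply]
    rw [add_add_add_comm, hx y, hz y, add_add_add_comm]
end dag

section dag1
variable {k}
variable (m : TensorAlgebra k L →ₗ[k] TensorAlgebra k L →ₗ[k] TensorAlgebra k L)
variable (D : L → TensorAlgebra k L →ₗ[k] TensorAlgebra k L)

lemma dagger1 (hmul : ∀ x, m 1 x = x) (hmur : ∀ x, m x 1 = x)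
    (hmrec : ∀ (a b : L) (v w : List L),
      m (TensorAlgebra.ι k a * word k v) (TensorAlgebra.ι k b * word k w)
        = TensorAlgebra.ι k a * m (word k v) (TensorAlgebra.ι k b * word k w)
          + TensorAlgebra.ι k b * m (TensorAlgebra.ι k a * word k v) (word k w)
          + TensorAlgebra.ι k (a * b) * m (word k v) (word k w))
    (hD1 : ∀ a : L, D a 1 = 0)
    (hDw : ∀ (a c : L) (u : List L),
      D a (TensorAlgebra.ι k c * word k u) = TensorAlgebra.ι k (a * c) * word k u) :
    ∀ (a b : L) (x y : TensorAlgebra k L),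
      m (TensorAlgebra.ι k a * x) (D b y) + m (D a x) (TensorAlgebra.ι k b * y)
          + TensorAlgebra.ι k (a * b) * m x y + TensorAlgebra.ι k (a * b) * m x y
        = TensorAlgebra.ι k a * m x (D b y) + D a (m x (TensorAlgebra.ι k b * y))
          + TensorAlgebra.ι k b * m (D a x) y + D b (m (TensorAlgebra.ι k a * x) y) := by
  intro a b
  have G := hmrec_gen m hmrec
  have Dg := Dgen D hDw
  have Di := D_iota D hDw
  have base : ∀ v w : List L,
      m (TensorAlgebra.ι k a * word k v) (D b (word k w))
          + m (D a (word k v)) (TensorAlgebra.ι k b * word k w)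
          + TensorAlgebra.ι k (a * b) * m (word k v) (word k w)
          + TensorAlgebra.ι k (a * b) * m (word k v) (word k w)
        = TensorAlgebra.ι k a * m (word k v) (D b (word k w))
          + D a (m (word k v) (TensorAlgebra.ι k b * word k w))
          + TensorAlgebra.ι k b * m (D a (word k v)) (word k w)
          + D b (m (TensorAlgebra.ι k a * word k v) (word k w)) := by
    intro v w
    cases v with
    | nil =>
      cases w with
      | nil =>
        simp only [word_nil, hD1, map_zero, LinearMap.map_zero₂, LinearMap.zero_apply, hmul,
          hmur, zero_add, add_zero, Dg, Di, mul_one, mul_zero]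
        rw [mul_comm b a]
      | cons d w' =>
        simp only [word_cons, word_nil, hD1, Dg, G, hmul, map_add, LinearMap.map_zero₂,
          LinearMap.zero_apply, zero_add, add_zero, mul_zero, smul_zero, Di]
        simp only [mul_comm, mul_left_comm, mul_assoc]
        abel
    | cons c v' =>
      cases w with
      | nil =>
        simp only [word_cons, word_nil, hD1, Dg, G, hmur, map_add, map_zero,
          LinearMap.zero_apply, zero_add, add_zero, mul_zero, mul_one, Di]
        rw [show (TensorAlgebra.ι k b : TensorAlgebra k L)
            = TensorAlgebra.ι k b * word k [] from by rw [word_nil, mul_one]]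
        simp only [G]
        simp only [word_nil, hmur, map_add, Dg, Di, one_mul, mul_one]
        simp only [mul_comm, mul_left_comm, mul_assoc]
        abel
      | cons d w' =>
        simp only [word_cons, Dg, G, map_add]
        simp only [mul_comm, mul_left_comm, mul_assoc]
        abel
  refine word_span_ind k (P := fun x => ∀ y : TensorAlgebra k L,
      m (TensorAlgebra.ι k a * x) (D b y) + m (D a x) (TensorAlgebra.ι k b * y)
          + TensorAlgebra.ι k (a * b) * m x y + TensorAlgebra.ι k (a * b) * m x y
        = TensorAlgebra.ι k a * m x (D b y) + D a (m x (TensorAlgebra.ι k b * y))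
          + TensorAlgebra.ι k b * m (D a x) y
          + D b (m (TensorAlgebra.ι k a * x) y)) ?_ ?_ ?_
  · intro v
    refine word_span_ind k (base v) ?_ ?_
    · intro c y hy
      simp only [map_smul, mul_smul_comm, LinearMap.smul_apply]
      simp only [← smul_add]
      rw [hy]
    · intro y z hy hz
      simp only [map_add, mul_add, LinearMap.add_apply]
      linear_combination (norm := abel) hy + hz
  · intro c x hx y
    simp only [map_smul, mul_smul_comm, LinearMap.smul_apply]
    simp only [← smul_add]
    rw [hx y]
  · intro x z hx hz y
    simp only [map_add, mul_add, LinearMap.add_apply]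
    linear_combination (norm := abel) hx y + hz y
end dag1

section main
variable {k}
variable (m : TensorAlgebra k L →ₗ[k] TensorAlgebra k L →ₗ[k] TensorAlgebra k L)
variable (D : L → TensorAlgebra k L →ₗ[k] TensorAlgebra k L)

lemma main_id (r : k) (hmul : ∀ x, m 1 x = x) (hmur : ∀ x, m x 1 = x)
    (hmrec : ∀ (a b : L) (v w : List L),
      m (TensorAlgebra.ι k a * word k v) (TensorAlgebra.ι k b * word k w)
        = TensorAlgebra.ι k a * m (word k v) (TensorAlgebra.ι k b * word k w)
          + TensorAlgebra.ι k b * m (TensorAlgebra.ι k a * word k v) (word k w)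
          + TensorAlgebra.ι k (a * b) * m (word k v) (word k w))
    (hD1 : ∀ a : L, D a 1 = 0)
    (hDw : ∀ (a c : L) (u : List L),
      D a (TensorAlgebra.ι k c * word k u) = TensorAlgebra.ι k (a * c) * word k u)
    (a b : L) (x y : TensorAlgebra k L) :
    m (TensorAlgebra.ι k a * x + r • D a x) (TensorAlgebra.ι k b * y + r • D b y)
      = TensorAlgebra.ι k a * m x (TensorAlgebra.ι k b * y + r • D b y)
        + r • D a (m x (TensorAlgebra.ι k b * y + r • D b y))
        + (TensorAlgebra.ι k b * m (TensorAlgebra.ι k a * x + r • D a x) y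
          + r • D b (m (TensorAlgebra.ι k a * x + r • D a x) y))
        + (1 - 2 * r) • (TensorAlgebra.ι k (a * b) * m x y + r • D (a * b) (m x y))
        + (r ^ 2 - r) • D (a * b) (m x y) := by
  have G := hmrec_gen m hmrec a b x y
  have d1 := dagger1 m D hmul hmur hmrec hD1 hDw a b x y
  have d2 := dagger2 m D hmul hmur hmrec hD1 hDw a b x y
  simp only [map_add, map_smul, LinearMap.add_apply, LinearMap.smul_apply, mul_add,
    mul_smul_comm, smul_add]
  linear_combination (norm := module) G + r • d1 + (r ^ 2) • d2
end main

section pair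
variable {k}
variable (S : TensorAlgebra k L →ₗ[k] TensorAlgebra k L) (s : k)

lemma S_pair (hS : ∀ u : List L, S (word k u) = psi k (fun n => s ^ (n - 1)) u) (a b : L) :
    S (TensorAlgebra.ι k a * TensorAlgebra.ι k b)
      = TensorAlgebra.ι k a * TensorAlgebra.ι k b + s • TensorAlgebra.ι k (a * b) := by
  have h := hS [a, b]
  rw [word_cons, word_cons, word_nil, mul_one] at h
  rw [h, psi_geom_cons₂, psi_single k _ (by simp), psi_single k _ (by simp)]
end pair

/--
The interpolated product `u ∗_r v = Σ^{−r}(Σ^r u * Σ^r v)` on a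
quasi-shuffle algebra satisfies: `1 ∗_r w = w ∗_r 1 = w`;
`a ∗_r b = ab + ba + (1−2r)(a⋄b)` for letters `a, b`; and
`(av) ∗_r (bw) = a(v ∗_r bw) + b(av ∗_r w) + (1−2r)(a⋄b)(v ∗_r w)
  + (r²−r)(a⋄b)⋄(v ∗_r w)` for words `v, w` with `vw ≠ 1`.
-/
theorem stmt8 (r : k)
    (m : TensorAlgebra k L →ₗ[k] TensorAlgebra k L →ₗ[k] TensorAlgebra k L)
    (hmul : ∀ x, m 1 x = x) (hmur : ∀ x, m x 1 = x)
    (hmrec : ∀ (a b : L) (v w : List L),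
      m (TensorAlgebra.ι k a * word k v) (TensorAlgebra.ι k b * word k w)
        = TensorAlgebra.ι k a * m (word k v) (TensorAlgebra.ι k b * word k w)
          + TensorAlgebra.ι k b * m (TensorAlgebra.ι k a * word k v) (word k w)
          + TensorAlgebra.ι k (a * b) * m (word k v) (word k w))
    (Sr Snr : TensorAlgebra k L →ₗ[k] TensorAlgebra k L)
    (hSr : ∀ w : List L, Sr (word k w) = psi k (fun n => r ^ (n - 1)) w)
    (hSnr : ∀ w : List L, Snr (word k w) = psi k (fun n => (-r) ^ (n - 1)) w)
    (D : L → TensorAlgebra k L →ₗ[k] TensorAlgebra k L)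
    (hD1 : ∀ a : L, D a 1 = 0)
    (hDw : ∀ (a c : L) (u : List L),
      D a (TensorAlgebra.ι k c * word k u) = TensorAlgebra.ι k (a * c) * word k u)
    (mr : TensorAlgebra k L → TensorAlgebra k L → TensorAlgebra k L)
    (hmr : ∀ x y, mr x y = Snr (m (Sr x) (Sr y))) :
    (∀ x, mr 1 x = x) ∧ (∀ x, mr x 1 = x) ∧
    (∀ a b : L,
      mr (TensorAlgebra.ι k a) (TensorAlgebra.ι k b)
        = TensorAlgebra.ι k a * TensorAlgebra.ι k b
          + TensorAlgebra.ι k b * TensorAlgebra.ι k a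
          + (1 - 2 * r) • TensorAlgebra.ι k (a * b)) ∧
    (∀ (a b : L) (v w : List L), v ++ w ≠ [] →
      mr (word k (a :: v)) (word k (b :: w))
        = TensorAlgebra.ι k a * mr (word k v) (word k (b :: w))
          + TensorAlgebra.ι k b * mr (word k (a :: v)) (word k w)
          + (1 - 2 * r) • (TensorAlgebra.ι k (a * b) * mr (word k v) (word k w))
          + (r ^ 2 - r) • D (a * b) (mr (word k v) (word k w))) := by
  have comp1 : ∀ z, Snr (Sr z) = z := SS'_id D Sr Snr r hD1 hDw hSr hSnr
  have hSr' : ∀ u : List L, Sr (word k u) = psi k (fun n => (-(-r)) ^ (n - 1)) u := by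
    intro u; rw [hSr]; congr 1; funext n; rw [neg_neg]
  have comp2 : ∀ z, Sr (Snr z) = z := SS'_id D Snr Sr (-r) hD1 hDw hSnr hSr'
  have hinj : ∀ z₁ z₂ : TensorAlgebra k L, Sr z₁ = Sr z₂ → z₁ = z₂ := by
    intro z₁ z₂ h; rw [← comp1 z₁, h, comp1]
  have hone : Sr 1 = 1 := S_one Sr r hSr
  refine ⟨?_, ?_, ?_, ?_⟩
  · intro x; rw [hmr, hone, hmul, comp1]
  · intro x; rw [hmr, hone, hmur, comp1]
  · intro a b
    rw [hmr, S_iota Sr r hSr, S_iota Sr r hSr]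
    have h := hmrec a b [] []
    simp only [word_nil, mul_one, hmul, hmur] at h
    rw [h, map_add, map_add, S_pair Snr (-r) hSnr, S_pair Snr (-r) hSnr,
      S_iota Snr (-r) hSnr, mul_comm b a]
    module
  · intro a b v w _
    simp only [hmr]
    refine hinj _ _ ?_
    rw [comp2]
    simp only [word_cons]
    simp only [map_add, map_smul]
    simp only [S_mul_iota D Sr r hD1 hDw hSr]
    simp only [← S_D_comm D Sr r hD1 hDw hSr]
    simp only [comp2]
    linear_combination (norm := module)
      main_id m D r hmul hmur hmrec hD1 hDw a b (Sr (word k v)) (Sr (word k w))
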